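/- Under the same hypotheses as in the convergence theorem for the adaptive gradient method with a (δ, L, μ, m, V)-model (sequences x_k, L_k, f_δ, ψ_k satisfying conditions (a)–(d), x⋆ a minimizer of f on Q, q_k := (L_k − μ)/(L_k + m) if L_k > μ and q_k := 0 otherwise, Q_j^N := ∏_{i=j}^{N} q_i with Q_j^N := 1 for j > N), the following bound on the argument holds: V[x_N](x⋆) ≤ Q_1^N · V[x₀](x⋆) + (δ̃ + 2δ) · ∑_{i=1}^{N} Q_{i+1}^N/(L_i + m). -/

import Mathlib

open RealInnerProductSpace Finset

open Filter Topology

/-- The Bregman divergence `V[y](x) = d(x) - d(y) - ⟪∇d(y), x - y⟫` generated by `d`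
with gradient map `Dd`. -/
noncomputable def breg {E : Type*} [NormedAddCommGroup E] [InnerProductSpace ℝ E]
    (d : E → ℝ) (Dd : E → E) (y x : E) : ℝ :=
  d x - d y - ⟪Dd y, x - y⟫

/-- `g` is a subgradient of `ψ` at `z` (relative to the set `Q`). -/
def IsSubgradOn {E : Type*} [NormedAddCommGroup E] [InnerProductSpace ℝ E]
    (Q : Set E) (ψ : E → ℝ) (z g : E) : Prop :=
  ∀ x ∈ Q, ψ z + ⟪g, x - z⟫ ≤ ψ x

/-- `ψ` is `m`-strongly convex relative to `d` on `Q`, where `V` is the Bregman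
divergence generated by `d`. -/
def StrongRelConvexOn {E : Type*} [NormedAddCommGroup E] [InnerProductSpace ℝ E]
    (Q : Set E) (V : E → E → ℝ) (m : ℝ) (ψ : E → ℝ) : Prop :=
  ∀ z ∈ Q, ∀ g : E, IsSubgradOn Q ψ z g → ∀ x ∈ Q, ψ z + ⟪g, x - z⟫ + m * V z x ≤ ψ x

/-- `y` is a `δ`-approximate minimizer of `Ψ` on `Q`: there exists a subgradient `h`
of `Ψ` at `y` such that `⟪h, x - y⟫ ≥ -δ` for all `x ∈ Q`. -/
def IsApproxMinOn {E : Type*} [NormedAddCommGroup E] [InnerProductSpace ℝ E]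
    (Q : Set E) (Ψ : E → ℝ) (δ : ℝ) (y : E) : Prop :=
  y ∈ Q ∧ ∃ h : E, IsSubgradOn Q Ψ y h ∧ ∀ x ∈ Q, -δ ≤ ⟪h, x - y⟫

lemma breg_three {E : Type*} [NormedAddCommGroup E] [InnerProductSpace ℝ E]
    (d : E → ℝ) (Dd : E → E) (a z x : E) :
    breg d Dd a x = breg d Dd a z + ⟪Dd z - Dd a, x - z⟫ + breg d Dd z x := by
  have h1 : (x : E) - a = (z - a) + (x - z) := by abel
  simp only [breg, inner_sub_left, h1, inner_add_right]
  ring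

lemma dirDeriv {E : Type*} [NormedAddCommGroup E] [InnerProductSpace ℝ E] [CompleteSpace E]
    (d : E → ℝ) (Dd : E → E) {z : E} (hd : HasGradientAt d (Dd z) z) (v : E) :
    Tendsto (fun t : ℝ => (d (z + t • v) - d z) / t) (𝓝[>] (0:ℝ)) (𝓝 ⟪Dd z, v⟫) := by
  have hline : HasDerivAt (fun t : ℝ => z + t • v) v 0 := by
    simpa using ((hasDerivAt_id (0:ℝ)).smul_const v).const_add z
  have hcomp : HasDerivAt (fun t : ℝ => d (z + t • v)) ⟪Dd z, v⟫ 0 := by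
    have h0 : z + (0:ℝ) • v = z := by simp
    have hf : HasFDerivAt d (InnerProductSpace.toDual ℝ E (Dd z)) ((fun t : ℝ => z + t • v) 0) := by
      rw [show (fun t : ℝ => z + t • v) 0 = z by simp]
      exact hd.hasFDerivAt
    exact (by simpa using hf.comp_hasDerivAt 0 hline : HasDerivAt (d ∘ fun t : ℝ => z + t • v) ⟪Dd z, v⟫ 0)
  have := hasDerivAt_iff_tendsto_slope.1 hcomp
  have h2 := this.mono_left (nhdsWithin_mono 0 (by intro t ht; exact ne_of_gt ht : Set.Ioi (0:ℝ) ⊆ {0}ᶜ))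
  refine h2.congr (fun t => ?_)
  simp [slope_def_field]

lemma grad_ineq {E : Type*} [NormedAddCommGroup E] [InnerProductSpace ℝ E] [CompleteSpace E]
    {d : E → ℝ} {Dd : E → E} (hd_conv : ConvexOn ℝ Set.univ d)
    (hd_diff : ∀ x, HasGradientAt d (Dd x) x) (z x : E) :
    ⟪Dd z, x - z⟫ ≤ d x - d z := by
  refine le_of_tendsto (dirDeriv d Dd (hd_diff z) (x - z)) ?_
  filter_upwards [Ioc_mem_nhdsGT_of_mem (Set.left_mem_Ico.2 zero_lt_one)] with t ht
  have heq : z + t • (x - z) = (1 - t) • z + t • x := by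
    rw [smul_sub, sub_smul, one_smul]; abel
  have hcv := hd_conv.2 (Set.mem_univ z) (Set.mem_univ x) (by linarith [ht.2] : (0:ℝ) ≤ 1 - t)
      ht.1.le (by ring)
  simp only [smul_eq_mul] at hcv
  rw [heq, div_le_iff₀ ht.1]
  calc d ((1-t)•z + t•x) - d z ≤ (1-t)*d z + t*d x - d z := by linarith [hcv]
    _ = (d x - d z) * t := by ring

lemma breg_nonneg {E : Type*} [NormedAddCommGroup E] [InnerProductSpace ℝ E] [CompleteSpace E]
    {d : E → ℝ} {Dd : E → E} (hd_conv : ConvexOn ℝ Set.univ d)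
    (hd_diff : ∀ x, HasGradientAt d (Dd x) x) (z x : E) :
    0 ≤ breg d Dd z x := by
  have := grad_ineq hd_conv hd_diff z x
  simp only [breg]; linarith

lemma subgrad_split {E : Type*} [NormedAddCommGroup E] [InnerProductSpace ℝ E] [CompleteSpace E]
    {Q : Set E} (hQ : Convex ℝ Q) (d : E → ℝ) (Dd : E → E)
    (hd_diff : ∀ x, HasGradientAt d (Dd x) x)
    (ψ : E → ℝ) (hψ : ConvexOn ℝ Q ψ) {w z : E} (hz : z ∈ Q) {Lc : ℝ} (hLc : 0 ≤ Lc) {h : E}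
    (hh : IsSubgradOn Q (fun u => ψ u + Lc * breg d Dd w u) z h) :
    IsSubgradOn Q ψ z (h - Lc • (Dd z - Dd w)) := by
  intro xx hx
  set v := xx - z with hv
  have hinner : ⟪h - Lc • (Dd z - Dd w), v⟫ = ⟪h, v⟫ - Lc * ⟪Dd z - Dd w, v⟫ := by
    simp [inner_sub_left, real_inner_smul_left]
  rw [hinner]
  have key : ⟪h, v⟫ ≤ (ψ xx - ψ z) + Lc * (⟪Dd z, v⟫ - ⟪Dd w, v⟫) := by
    have hlim : Tendsto (fun t : ℝ => (ψ xx - ψ z) + Lc * ((d (z + t • v) - d z)/t - ⟪Dd w, v⟫))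
        (𝓝[>] (0:ℝ)) (𝓝 ((ψ xx - ψ z) + Lc * (⟪Dd z, v⟫ - ⟪Dd w, v⟫))) :=
      tendsto_const_nhds.add (((dirDeriv d Dd (hd_diff z) v).sub tendsto_const_nhds).const_mul Lc)
    refine ge_of_tendsto hlim ?_
    filter_upwards [Ioc_mem_nhdsGT_of_mem (Set.left_mem_Ico.2 zero_lt_one)] with t ht
    have heq : z + t • v = (1 - t) • z + t • xx := by
      rw [hv, smul_sub, sub_smul, one_smul]; abel
    have hmem : z + t • v ∈ Q := by
      rw [heq]; exact hQ hz hx (by linarith [ht.2]) ht.1.le (by ring)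
    have hsub := hh _ hmem
    have hconv : ψ (z + t • v) ≤ (1 - t) * ψ z + t * ψ xx := by
      rw [heq]; exact hψ.2 hz hx (by linarith [ht.2]) ht.1.le (by ring)
    have hip : ⟪h, z + t • v - z⟫ = t * ⟪h, v⟫ := by
      rw [show z + t • v - z = t • v by abel]; exact real_inner_smul_right h v t
    have hbr : breg d Dd w (z + t • v) - breg d Dd w z
        = d (z + t • v) - d z - t * ⟪Dd w, v⟫ := by
      simp only [breg]
      have : (z + t • v) - w = (z - w) + t • v := by abel
      rw [this, inner_add_right, real_inner_smul_right]
      ring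
    simp only at hsub
    rw [hip] at hsub
    have hbr' : Lc * (breg d Dd w (z + t • v) - breg d Dd w z)
        = Lc * (d (z + t • v) - d z - t * ⟪Dd w, v⟫) := by rw [hbr]
    -- hsub : ψ z + Lc * breg w z + t*⟪h,v⟫ ≤ ψ (z+t•v) + Lc * breg w (z+t•v)
    have hmul : t * ⟪h, v⟫ ≤ t * (ψ xx - ψ z) + Lc * (d (z + t • v) - d z - t * ⟪Dd w, v⟫) := by
      nlinarith [hsub, hconv, hbr']
    have ht0 : (0:ℝ) < t := ht.1
    have : (ψ xx - ψ z) + Lc * ((d (z + t • v) - d z)/t - ⟪Dd w, v⟫)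
        = (t * (ψ xx - ψ z) + Lc * (d (z + t • v) - d z - t * ⟪Dd w, v⟫)) / t := by
      field_simp
    rw [this, le_div_iff₀ ht0]
    linarith [hmul]
  have h5 : Lc * ⟪Dd z - Dd w, v⟫ = Lc * (⟪Dd z, v⟫ - ⟪Dd w, v⟫) := by
    rw [inner_sub_left]
  linarith [key, h5]

/-- Theorem 3.1, argument bound: convergence rate in argument of the adaptive
gradient method with an inexact `(δ, L, μ, m, V)`-model. -/
theorem stmt4
    {E : Type*} [NormedAddCommGroup E] [InnerProductSpace ℝ E] [FiniteDimensional ℝ E]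
    (Q : Set E) (hQ : Convex ℝ Q)
    (d : E → ℝ) (Dd : E → E)
    (hd_conv : ConvexOn ℝ Set.univ d) (hd_diff : ∀ x, HasGradientAt d (Dd x) x)
    (f : E → ℝ) (μ m δ δt : ℝ)
    (hμ : 0 ≤ μ) (hm : 0 ≤ m) (hδ : 0 ≤ δ) (hδt : 0 ≤ δt)
    (N : ℕ) (hN : 1 ≤ N)
    (x : ℕ → E) (hxQ : ∀ k ≤ N, x k ∈ Q)
    (L : ℕ → ℝ) (hL : ∀ k, 1 ≤ k → k ≤ N → 0 < L k)
    (fδ : ℕ → ℝ) (ψ : ℕ → E → ℝ)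
    (hψ_conv : ∀ k < N, ConvexOn ℝ Q (ψ k))
    (hψ0 : ∀ k < N, ψ k (x k) = 0)
    (hψ_strong : ∀ k < N, StrongRelConvexOn Q (breg d Dd) m (ψ k))
    (ha : ∀ k < N, ∀ u ∈ Q, μ * breg d Dd (x k) u ≤ f u - fδ k - ψ k u)
    (hb : ∀ k ≤ N, f (x k) - δ ≤ fδ k ∧ fδ k ≤ f (x k))
    (hc : ∀ k < N,
      IsApproxMinOn Q (fun u => ψ k u + L (k + 1) * breg d Dd (x k) u) δt (x (k + 1)))
    (hd_ls : ∀ k < N,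
      fδ (k + 1) ≤ fδ k + ψ k (x (k + 1)) + L (k + 1) * breg d Dd (x k) (x (k + 1)) + δ)
    (xs : E) (hxs : xs ∈ Q) (hmin : ∀ u ∈ Q, f xs ≤ f u)
    (q : ℕ → ℝ) (hq : ∀ k, q k = if μ < L k then (L k - μ) / (L k + m) else 0) :
    breg d Dd (x N) xs ≤
      (∏ i ∈ Finset.Icc 1 N, q i) * breg d Dd (x 0) xs
        + (δt + 2 * δ) * ∑ i ∈ Finset.Icc 1 N, (∏ j ∈ Finset.Icc (i + 1) N, q j) / (L i + m) := by
  
  haveI : CompleteSpace E := FiniteDimensional.complete ℝ E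
  have hqnn : ∀ k, 1 ≤ k → k ≤ N → 0 ≤ q k := by
    intro k h1 h2
    rw [hq k]
    split
    · have hLk := hL k h1 h2
      exact div_nonneg (by linarith) (by linarith)
    · exact le_refl 0
  have onestep : ∀ k < N, breg d Dd (x (k+1)) xs ≤
      q (k+1) * breg d Dd (x k) xs + (δt + 2*δ) / (L (k+1) + m) := by
    intro k hk
    have hk1 : k + 1 ≤ N := hk
    obtain ⟨hz, h, hsub, happrox⟩ := hc k hk
    have hL' : 0 < L (k+1) := hL (k+1) (Nat.succ_le_succ k.zero_le) hk1
    have hg := subgrad_split hQ d Dd hd_diff (ψ k) (hψ_conv k hk) hz hL'.le hsub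
    have hstrong := hψ_strong k hk (x (k+1)) hz _ hg xs hxs
    have hinner : ⟪h - L (k+1) • (Dd (x (k+1)) - Dd (x k)), xs - x (k+1)⟫
        = ⟪h, xs - x (k+1)⟫ - L (k+1) * ⟪Dd (x (k+1)) - Dd (x k), xs - x (k+1)⟫ := by
      simp [inner_sub_left, real_inner_smul_left]
    rw [hinner] at hstrong
    have h3 := breg_three d Dd (x k) (x (k+1)) xs
    have hI : L (k+1) * ⟪Dd (x (k+1)) - Dd (x k), xs - x (k+1)⟫
        = L (k+1) * (breg d Dd (x k) xs - breg d Dd (x k) (x (k+1)) - breg d Dd (x (k+1)) xs) := by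
      rw [show ⟪Dd (x (k+1)) - Dd (x k), xs - x (k+1)⟫
        = breg d Dd (x k) xs - breg d Dd (x k) (x (k+1)) - breg d Dd (x (k+1)) xs from by
          linarith [h3]]
    have hA := ha k hk xs hxs
    have hB := (hb (k+1) hk1).1
    have hD := hd_ls k hk
    have hM := hmin (x (k+1)) (hxQ (k+1) hk1)
    have happ := happrox xs hxs
    have hVk := breg_nonneg hd_conv hd_diff (x k) xs
    have hmain : (L (k+1) + m) * breg d Dd (x (k+1)) xs
        ≤ (L (k+1) - μ) * breg d Dd (x k) xs + (δt + 2*δ) := by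
      nlinarith [hstrong, hI, hA, hB, hD, hM, happ, hVk]
    have hLm : 0 < L (k+1) + m := by linarith
    rcases lt_or_ge μ (L (k+1)) with hcase | hcase
    · rw [hq (k+1), if_pos hcase, div_mul_eq_mul_div, ← add_div, le_div_iff₀ hLm]
      linarith [hmain]
    · rw [hq (k+1), if_neg (not_lt.2 hcase), zero_mul, zero_add, le_div_iff₀ hLm]
      have hneg : (L (k+1) - μ) * breg d Dd (x k) xs ≤ 0 :=
        mul_nonpos_of_nonpos_of_nonneg (by linarith) hVk
      linarith [hmain, hneg]
  have key : ∀ n, n ≤ N → breg d Dd (x n) xs ≤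
      (∏ i ∈ Finset.Icc 1 n, q i) * breg d Dd (x 0) xs
        + (δt + 2*δ) * ∑ i ∈ Finset.Icc 1 n, (∏ j ∈ Finset.Icc (i+1) n, q j) / (L i + m) := by
    intro n
    induction n with
    | zero => intro _; simp
    | succ n ih =>
      intro hn
      have hnN : n < N := Nat.lt_of_succ_le hn
      have hrec := ih (le_of_lt hnN)
      have hstep := onestep n hnN
      have hq1 : 0 ≤ q (n+1) := hqnn (n+1) (Nat.succ_le_succ n.zero_le) hn
      have hP : (∏ i ∈ Finset.Icc 1 (n+1), q i) = (∏ i ∈ Finset.Icc 1 n, q i) * q (n+1) :=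
        Finset.prod_Icc_succ_top (Nat.succ_le_succ n.zero_le) q
      have hS : (∑ i ∈ Finset.Icc 1 (n+1), (∏ j ∈ Finset.Icc (i+1) (n+1), q j) / (L i + m))
          = q (n+1) * (∑ i ∈ Finset.Icc 1 n, (∏ j ∈ Finset.Icc (i+1) n, q j) / (L i + m))
            + 1 / (L (n+1) + m) := by
        rw [Finset.sum_Icc_succ_top (Nat.succ_le_succ n.zero_le)]
        have hlast : (∏ j ∈ Finset.Icc (n+1+1) (n+1), q j) = 1 := by
          rw [Finset.Icc_eq_empty (by omega)]; simp
        rw [hlast, Finset.mul_sum]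
        congr 1
        refine Finset.sum_congr rfl ?_
        intro i hi
        have hi' : i + 1 ≤ n + 1 := by
          have := (Finset.mem_Icc.1 hi).2; omega
        rw [Finset.prod_Icc_succ_top hi']
        ring
      calc breg d Dd (x (n+1)) xs
          ≤ q (n+1) * breg d Dd (x n) xs + (δt + 2*δ)/(L (n+1) + m) := hstep
        _ ≤ q (n+1) * ((∏ i ∈ Finset.Icc 1 n, q i) * breg d Dd (x 0) xs
              + (δt + 2*δ) * ∑ i ∈ Finset.Icc 1 n, (∏ j ∈ Finset.Icc (i+1) n, q j) / (L i + m))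
            + (δt + 2*δ)/(L (n+1) + m) := by
            have := mul_le_mul_of_nonneg_left hrec hq1
            linarith
        _ = (∏ i ∈ Finset.Icc 1 (n+1), q i) * breg d Dd (x 0) xs
            + (δt + 2*δ) * ∑ i ∈ Finset.Icc 1 (n+1),
                (∏ j ∈ Finset.Icc (i+1) (n+1), q j) / (L i + m) := by
            rw [hP, hS]
            ring
  exact key N le_rfl
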